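/- For fixed θ > 0 and C > 0, the function s ↦ (s/θ)·log_e((e^{θC} − (1 − s))/s) is strictly increasing on the interval (0, 1]; that is, the maximum average arrival rate of an ON–OFF discrete Markov source with p11 = 1 − s and p22 = s increases as the ON-state probability s increases. -/

import Mathlib

open Real

/-- For fixed `θ > 0` and `C > 0`, the function
`s ↦ (s/θ)·log((e^{θC} − (1 − s))/s)` is strictly increasing on `(0, 1]`; that is, the
maximum average arrival rate of an ON–OFF discrete Markov source with `p11 = 1 − s` and
`p22 = s` increases as the ON-state probability `s` increases. -/
theorem discrete_markov_throughput_strictMono_in_on_probability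
    (θ C : ℝ) (hθ : 0 < θ) (hC : 0 < C) :
    StrictMonoOn (fun s : ℝ => (s / θ) * Real.log ((Real.exp (θ * C) - (1 - s)) / s))
      (Set.Ioc 0 1) := by
  set a : ℝ := Real.exp (θ * C) - 1 with ha
  have hapos : 0 < a := by
    have : 1 < Real.exp (θ * C) := by
      have : 0 < θ * C := mul_pos hθ hC
      simpa using Real.one_lt_exp_iff.mpr this
    linarith
  have key : ∀ s : ℝ, Real.exp (θ * C) - (1 - s) = a + s := by
    intro s; simp [ha]; ring
  have hf : ∀ s : ℝ, (s / θ) * Real.log ((Real.exp (θ * C) - (1 - s)) / s)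
      = (s / θ) * Real.log ((a + s) / s) := by
    intro s; rw [key]
  have hmain : StrictMonoOn (fun s : ℝ => (s / θ) * Real.log ((a + s) / s)) (Set.Ioc 0 1) := by
    apply strictMonoOn_of_deriv_pos (convex_Ioc 0 1)
    · apply ContinuousOn.mul
      · exact (continuousOn_id.div_const θ)
      · apply ContinuousOn.log
        · apply ContinuousOn.div
          · exact (continuousOn_const.add continuousOn_id)
          · exact continuousOn_id
          · intro x hx; exact ne_of_gt hx.1
        · intro x hx
          exact ne_of_gt (div_pos (by linarith [hx.1]) hx.1)
    · intro x hx
      rw [interior_Ioc] at hx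
      have hx0 : 0 < x := hx.1
      have hax : 0 < a + x := by linarith
      -- derivative
      have hd : HasDerivAt (fun s : ℝ => (s / θ) * Real.log ((a + s) / s))
          ((1 / θ) * Real.log ((a + x) / x) + (x / θ) * (1 / (a + x) - 1 / x)) x := by
        have h1 : HasDerivAt (fun s : ℝ => s / θ) (1 / θ) x := by
          simpa using (hasDerivAt_id x).div_const θ
        have h2 : HasDerivAt (fun s : ℝ => Real.log ((a + s) / s))
            (1 / (a + x) - 1 / x) x := by
          have hlog : ∀ᶠ s in nhds x, Real.log ((a + s) / s)
              = Real.log (a + s) - Real.log s := by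
            filter_upwards [eventually_gt_nhds hx0] with s hs
            exact Real.log_div (by positivity) (ne_of_gt hs)
          have ha' : HasDerivAt (fun s : ℝ => Real.log (a + s)) (1 / (a + x)) x := by
            have : HasDerivAt (fun s : ℝ => a + s) 1 x := by
              simpa using (hasDerivAt_id x).const_add a
            simpa [one_div] using this.log (ne_of_gt hax)
          have hb : HasDerivAt Real.log (1 / x) x := by
            simpa [one_div] using Real.hasDerivAt_log (ne_of_gt hx0)
          exact (ha'.sub hb).congr_of_eventuallyEq (by filter_upwards [hlog] with s hs; rw [hs]; rfl)
        simpa [mul_comm] using h1.fun_mul h2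
      rw [hd.deriv]
      -- positivity of the derivative
      have hlt : Real.log (x / (a + x)) < x / (a + x) - 1 :=
        Real.log_lt_sub_one_of_pos (div_pos hx0 hax)
          (by intro h; rw [div_eq_one_iff_eq (ne_of_gt hax)] at h; linarith)
      have hloginv : Real.log (x / (a + x)) = - Real.log ((a + x) / x) := by
        rw [← Real.log_inv]; congr 1; field_simp
      have hkey : 0 < Real.log ((a + x) / x) + x / (a + x) - 1 := by
        rw [hloginv] at hlt; linarith
      have hsimp : (1 / θ) * Real.log ((a + x) / x) + (x / θ) * (1 / (a + x) - 1 / x)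
          = (1 / θ) * (Real.log ((a + x) / x) + x / (a + x) - 1) := by
        field_simp
        ring
      rw [hsimp]
      positivity
  intro x hx y hy hxy
  simp only [hf]
  exact hmain hx hy hxy
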